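/- Let G be a Lie group modeled on a finite-dimensional real normed space (model with corners I), F : G → ℝ a smooth map satisfying F(g·h) = F(g) + F(h) for all g, h ∈ G, and γ : ℝ → G a smooth curve. Then for all t ∈ ℝ, F(γ(t)) = F(γ(0)) + ∫_0^t ξ( dR_{γ(s)⁻¹}( γ'(s) ) ) ds, where ξ := mfderiv I 𝓘(ℝ,ℝ) F 1 is the differential of F at the identity, γ'(s) := (mfderiv 𝓘(ℝ,ℝ) I γ s)(1) is the tangent vector of the curve at s, and dR_{γ(s)⁻¹} := mfderiv I I (fun x => x * γ(s)⁻¹) (γ(s)) is the differential of right translation by γ(s)⁻¹ at γ(s). -/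

import Mathlib

open scoped Manifold

/-- let `G` be a Lie group modeled on a finite-dimensional real normed
space (model with corners `I`), `F : G → ℝ` smooth with `F(g·h) = F(g) + F(h)`, and
`γ : ℝ → G` a smooth curve.  Then for all `t`,
`F(γ(t)) = F(γ(0)) + ∫_0^t ξ(dR_{γ(s)⁻¹}(γ'(s))) ds`,
where `ξ = mfderiv I 𝓘(ℝ,ℝ) F 1`, `γ'(s) = (mfderiv 𝓘(ℝ,ℝ) I γ s) 1`, and
`dR_{γ(s)⁻¹} = mfderiv I I (fun x => x * γ(s)⁻¹) (γ(s))`. -/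

theorem key {EG : Type*} [NormedAddCommGroup EG] [NormedSpace ℝ EG]
    {H : Type*} [TopologicalSpace H] {I : ModelWithCorners ℝ EG H}
    {G : Type*} [TopologicalSpace G] [ChartedSpace H G] [Group G] [LieGroup I (⊤ : ℕ∞) G]
    (F : G → ℝ) (hF : ContMDiff I 𝓘(ℝ, ℝ) (⊤ : ℕ∞) F)
    (hadd : ∀ g h : G, F (g * h) = F g + F h) (g : G) :
    mfderiv I 𝓘(ℝ, ℝ) F g =
      (mfderiv I 𝓘(ℝ, ℝ) F 1).comp (mfderiv I I (fun x => x * g⁻¹) g) := by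
  have hR : HasMFDerivAt I I (fun x : G => x * g⁻¹) g
      (mfderiv I I (fun x : G => x * g⁻¹) g) :=
    ((contMDiff_mul_right (G := G) (I := I) (a := g⁻¹) (n := ((⊤ : ℕ∞) : WithTop ℕ∞))).mdifferentiableAt
      (by simp)).hasMFDerivAt
  have hF1 : HasMFDerivAt I 𝓘(ℝ, ℝ) F (g * g⁻¹) (mfderiv I 𝓘(ℝ, ℝ) F 1) := by
    rw [mul_inv_cancel]
    exact (hF.mdifferentiableAt (by simp)).hasMFDerivAt
  have hcomp := (hF1.comp g hR).add (hasMFDerivAt_const (I := I) (I' := 𝓘(ℝ, ℝ))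
    (c := F g) (x := g))
  have hFeq : F = ((F ∘ fun x => x * g⁻¹) + fun _ => F g) := by
    funext y
    simp only [Function.comp, Pi.add_apply]
    rw [← hadd, inv_mul_cancel_right]
  conv_lhs => rw [hFeq]
  exact hcomp.mfderiv.trans (add_zero _)

theorem statement12 {EG : Type*} [NormedAddCommGroup EG] [NormedSpace ℝ EG]
    [FiniteDimensional ℝ EG]
    {H : Type*} [TopologicalSpace H] {I : ModelWithCorners ℝ EG H}
    {G : Type*} [TopologicalSpace G] [ChartedSpace H G] [Group G] [LieGroup I (⊤ : ℕ∞) G]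
    (F : G → ℝ) (hF : ContMDiff I 𝓘(ℝ, ℝ) (⊤ : ℕ∞) F)
    (hadd : ∀ g h : G, F (g * h) = F g + F h)
    (γ : ℝ → G) (hγ : ContMDiff 𝓘(ℝ, ℝ) I (⊤ : ℕ∞) γ) :
    ∀ t : ℝ,
      F (γ t) = F (γ 0) +
        ∫ s in (0 : ℝ)..t,
          (show ℝ from
            mfderiv I 𝓘(ℝ, ℝ) F 1
              (mfderiv I I (fun x => x * (γ s)⁻¹) (γ s)
                (mfderiv 𝓘(ℝ, ℝ) I γ s (1 : ℝ)))) := by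
  intro t
  have hFγ : ContMDiff 𝓘(ℝ, ℝ) 𝓘(ℝ, ℝ) (⊤ : ℕ∞) (F ∘ γ) := hF.comp hγ
  have hcd := contMDiff_iff_contDiff.mp hFγ
  have hint : ∀ s : ℝ,
      deriv (F ∘ γ) s =
        mfderiv I 𝓘(ℝ, ℝ) F 1
          (mfderiv I I (fun x => x * (γ s)⁻¹) (γ s)
            (mfderiv 𝓘(ℝ, ℝ) I γ s (1 : ℝ))) := by
    intro s
    have hchain : mfderiv 𝓘(ℝ, ℝ) 𝓘(ℝ, ℝ) (F ∘ γ) s =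
        (mfderiv I 𝓘(ℝ, ℝ) F (γ s)).comp (mfderiv 𝓘(ℝ, ℝ) I γ s) :=
      mfderiv_comp s (hF.mdifferentiableAt (by simp)) (hγ.mdifferentiableAt (by simp))
    have h1 : deriv (F ∘ γ) s = mfderiv 𝓘(ℝ, ℝ) 𝓘(ℝ, ℝ) (F ∘ γ) s (1 : ℝ) := by
      rw [mfderiv_eq_fderiv]; rfl
    rw [h1, hchain, key F hF hadd (γ s)]
    rfl
  have hftc : ∫ s in (0 : ℝ)..t, deriv (F ∘ γ) s = (F ∘ γ) t - (F ∘ γ) 0 :=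
    intervalIntegral.integral_deriv_eq_sub
      (fun s _ => hcd.differentiable (by simp) s)
      ((hcd.continuous_deriv (by exact_mod_cast le_top)).continuousOn.intervalIntegrable)
  have : ∫ s in (0 : ℝ)..t,
      (show ℝ from mfderiv I 𝓘(ℝ, ℝ) F 1
        (mfderiv I I (fun x => x * (γ s)⁻¹) (γ s)
          (mfderiv 𝓘(ℝ, ℝ) I γ s (1 : ℝ)))) = (F ∘ γ) t - (F ∘ γ) 0 := by
    rw [← hftc]
    exact intervalIntegral.integral_congr fun s _ => (hint s).symm
  rw [this]
  simp [Function.comp]
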